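/- arXiv:1312.7050 — 4 statements merged into one kernel-verified Lean document; each statement's English description precedes it below -/
import Mathlib

section
/- Suppose for every positive stochastic vector μ = (μ₁,…,μₙ), the point (x*, y*) is a saddle point of ∑ᵢ μᵢ fᵢ on X × Y, where each fᵢ : ℝ^{m₁} × ℝ^{m₂} → ℝ. Then (x*, y*) is a saddle point of each fᵢ individually on X × Y. -/
open scoped BigOperators

/-- A saddle point of `φ` on `X × Y`. -/
def IsSaddlePoint {E₁ E₂ : Type*} (φ : E₁ → E₂ → ℝ) (X : Set E₁) (Y : Set E₂)
    (xs : E₁) (ys : E₂) : Prop :=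
  xs ∈ X ∧ ys ∈ Y ∧ ∀ x ∈ X, ∀ y ∈ Y, φ xs y ≤ φ xs ys ∧ φ xs ys ≤ φ x ys

theorem saddle_of_all_convex_combinations {m₁ m₂ n : ℕ}
    (f : Fin n → EuclideanSpace ℝ (Fin m₁) → EuclideanSpace ℝ (Fin m₂) → ℝ)
    (X : Set (EuclideanSpace ℝ (Fin m₁))) (Y : Set (EuclideanSpace ℝ (Fin m₂)))
    (xs : EuclideanSpace ℝ (Fin m₁)) (ys : EuclideanSpace ℝ (Fin m₂))
    (h : ∀ μ : Fin n → ℝ, (∀ i, 0 < μ i) → ∑ i, μ i = 1 →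
      IsSaddlePoint (fun x y => ∑ i, μ i * f i x y) X Y xs ys) :
    ∀ i, IsSaddlePoint (f i) X Y xs ys := by
  intro i
  have hn : 0 < n := i.pos
  have hn' : (0:ℝ) < n := by exact_mod_cast hn
  have hbase := h (fun _ => (n:ℝ)⁻¹) (fun _ => by positivity)
    (by simp [Finset.sum_const, Finset.card_fin]; field_simp)
  refine ⟨hbase.1, hbase.2.1, ?_⟩
  intro x hx y hy
  -- the combination function
  set g : ℝ → EuclideanSpace ℝ (Fin m₁) → EuclideanSpace ℝ (Fin m₂) → ℝ :=
    fun t a b => t * f i a b + (1 - t)/n * ∑ j, f j a b with hg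
  have key : ∀ t ∈ Set.Ioo (0:ℝ) 1,
      g t xs y ≤ g t xs ys ∧ g t xs ys ≤ g t x ys := by
    intro t ht
    have hμpos : ∀ j, 0 < (1 - t)/n + (if j = i then t else 0) := by
      intro j
      have h1 : (0:ℝ) < (1 - t)/n := by
        apply div_pos (by linarith [ht.2]) hn'
      by_cases hj : j = i <;> simp [hj] <;> linarith [ht.1]
    have hμsum : ∑ j, ((1 - t)/n + (if j = i then t else 0)) = 1 := by
      rw [Finset.sum_add_distrib]
      simp [Finset.sum_const, Finset.card_fin, Finset.sum_ite_eq']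
      field_simp
      ring
    have hrw : ∀ a b, ∑ j, ((1 - t)/n + (if j = i then t else 0)) * f j a b = g t a b := by
      intro a b
      simp only [add_mul, Finset.sum_add_distrib, ite_mul, zero_mul,
        Finset.sum_ite_eq', Finset.mem_univ, if_true, hg, ← Finset.mul_sum]
      ring
    have hs := (h _ hμpos hμsum).2.2 x hx y hy
    simp only [hrw] at hs
    exact hs
  have hmem : Set.Ioo (0:ℝ) 1 ∈ nhdsWithin (1:ℝ) (Set.Iio 1) := by
    have : Set.Ioo (0:ℝ) 1 = Set.Ioi 0 ∩ Set.Iio 1 := Set.Ioi_inter_Iio.symm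
    rw [this]
    exact Filter.inter_mem (nhdsWithin_le_nhds (Ioi_mem_nhds one_pos)) self_mem_nhdsWithin
  have hlim : ∀ a b, Filter.Tendsto (fun t => g t a b)
      (nhdsWithin (1:ℝ) (Set.Iio 1)) (nhds (f i a b)) := by
    intro a b
    have hc : Continuous fun t : ℝ => g t a b := by
      simp only [hg]; continuity
    have h2 := (hc.tendsto 1).mono_left (nhdsWithin_le_nhds (s := Set.Iio 1))
    simpa [hg] using h2
  constructor
  · refine le_of_tendsto_of_tendsto (hlim xs y) (hlim xs ys) ?_
    filter_upwards [hmem] with t ht using (key t ht).1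
  · refine le_of_tendsto_of_tendsto (hlim xs ys) (hlim x ys) ?_
    filter_upwards [hmem] with t ht using (key t ht).2
end

section
/- Suppose nonnegative sequences {αₖ} and {xₖ} (with xₖ = max-distance of states to a fixed point) satisfy x_{k+1} ≤ xₖ + αₖ L for all k, with L > 0, and lim_{k→∞} αₖ ∑_{s=0}^{k−1} αₛ = 0. Then lim_{k→∞} αₖ xₖ = 0. -/
open Filter

theorem stepsize_times_state_tendsto_zero
    (α x : ℕ → ℝ) (hα : ∀ k, 0 ≤ α k) (hx : ∀ k, 0 ≤ x k)
    (L : ℝ) (hL : 0 < L)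
    (hrec : ∀ k, x (k + 1) ≤ x k + α k * L)
    (hcond : Tendsto (fun k => α k * ∑ s ∈ Finset.range k, α s) atTop (nhds 0)) :
    Tendsto (fun k => α k * x k) atTop (nhds 0) := by
  set S : ℕ → ℝ := fun k => ∑ s ∈ Finset.range k, α s with hS
  have hSmono : Monotone S := by
    intro a b hab
    exact Finset.sum_le_sum_of_subset_of_nonneg (Finset.range_subset_range.mpr hab)
      (fun i _ _ => hα i)
  -- α tends to 0
  have hα0 : Tendsto α atTop (nhds 0) := by
    by_cases hb : BddAbove (Set.range S)
    · have hconv : Tendsto S atTop (nhds (⨆ k, S k)) :=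
        tendsto_atTop_ciSup hSmono hb
      have h1 : Tendsto (fun k => S (k + 1) - S k) atTop (nhds ((⨆ k, S k) - ⨆ k, S k)) :=
        ((hconv.comp (tendsto_add_atTop_nat 1)).sub hconv)
      simp only [sub_self] at h1
      have : ∀ k, S (k + 1) - S k = α k := by
        intro k
        simp [hS, Finset.sum_range_succ]
      simpa [this] using h1
    · have hdiv : Tendsto S atTop atTop := tendsto_atTop_atTop_of_monotone' hSmono hb
      have hev : ∀ᶠ k in atTop, (1:ℝ) ≤ S k := hdiv.eventually_ge_atTop 1
      refine squeeze_zero' (Eventually.of_forall fun k => hα k) ?_ hcond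
      filter_upwards [hev] with k hk
      calc α k = α k * 1 := by ring
        _ ≤ α k * S k := by
            exact mul_le_mul_of_nonneg_left hk (hα k)
  -- bound x k ≤ x 0 + L * S k
  have hxb : ∀ k, x k ≤ x 0 + L * S k := by
    intro k
    induction k with
    | zero => simp [hS]
    | succ n ih =>
      have := hrec n
      have : x (n + 1) ≤ x 0 + L * S n + α n * L := le_trans this (by linarith)
      calc x (n + 1) ≤ x 0 + L * S n + α n * L := this
        _ = x 0 + L * (S n + α n) := by ring
        _ = x 0 + L * S (n + 1) := by simp [hS, Finset.sum_range_succ]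
  -- squeeze
  have hlim : Tendsto (fun k => α k * x 0 + L * (α k * S k)) atTop (nhds 0) := by
    have := (hα0.mul_const (x 0)).add (hcond.const_mul L)
    simpa using this
  refine squeeze_zero' (Eventually.of_forall fun k => mul_nonneg (hα k) (hx k))
    (Eventually.of_forall fun k => ?_) hlim
  calc α k * x k ≤ α k * (x 0 + L * S k) := mul_le_mul_of_nonneg_left (hxb k) (hα k)
    _ = α k * x 0 + L * (α k * S k) := by ring
end

section
/- Let hₖ ≥ 0 satisfy, for some integer T ≥ 1, 0 < η < 1, L > 0 and nonnegative nonincreasing sequence {λₖ} with ∑ₖ λₖ² < ∞: h_{tT+q} ≤ (1 − η^T) h_{(t−1)T+q} + 2L ∑_{r=(t−1)T+q}^{tT+q−1} λᵣ for all t ≥ 1 and 0 ≤ q ≤ T−1. Then ∑_{k=0}^∞ λₖ hₖ < ∞. -/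
theorem summable_weighted_disagreement
    (h lam : ℕ → ℝ) (hh : ∀ k, 0 ≤ h k) (hlam : ∀ k, 0 ≤ lam k)
    (hmono : ∀ k, lam (k + 1) ≤ lam k) (hsq : Summable (fun k => lam k ^ 2))
    (T : ℕ) (hT : 1 ≤ T) (η : ℝ) (hη0 : 0 < η) (hη1 : η < 1) (L : ℝ) (hL : 0 < L)
    (hrec : ∀ t : ℕ, 1 ≤ t → ∀ q : ℕ, q ≤ T - 1 →
      h (t * T + q) ≤ (1 - η ^ T) * h ((t - 1) * T + q) +
        2 * L * ∑ r ∈ Finset.Ico ((t - 1) * T + q) (t * T + q), lam r) :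
    Summable (fun k => lam k * h k) := by
  set ρ : ℝ := 1 - η ^ T with hρdef
  have hρ0 : 0 ≤ ρ := by
    have : η ^ T ≤ 1 := pow_le_one₀ hη0.le hη1.le
    simp only [hρdef]; linarith
  have hρ1 : ρ < 1 := by
    have : 0 < η ^ T := pow_pos hη0 T
    simp only [hρdef]; linarith
  have hlamanti : Antitone lam := antitone_nat_of_succ_le hmono
  set Λ : ℝ := ∑' k, lam k ^ 2 with hΛdef
  have hΛ0 : 0 ≤ Λ := tsum_nonneg (fun k => sq_nonneg _)
  -- the one-step inequality for each residue class q
  have hstep : ∀ q, q < T → ∀ t : ℕ,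
      lam ((t + 1) * T + q) * h ((t + 1) * T + q) ≤
        ρ * (lam (t * T + q) * h (t * T + q)) + 2 * L * T * lam (t * T + q) ^ 2 := by
    intro q hq t
    have hq' : q ≤ T - 1 := by omega
    have A := hrec (t + 1) (by omega) q hq'
    have ht1 : (t + 1 : ℕ) - 1 = t := rfl
    rw [ht1] at A
    have hIco : ((t + 1) * T + q) = (t * T + q) + T := by ring
    have Ssum : ∑ r ∈ Finset.Ico (t * T + q) ((t + 1) * T + q), lam r
        ≤ (T : ℝ) * lam (t * T + q) := by
      have := Finset.sum_le_card_nsmul (Finset.Ico (t * T + q) ((t + 1) * T + q)) lam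
        (lam (t * T + q)) (fun x hx => hlamanti (Finset.mem_Ico.mp hx).1)
      simpa [hIco, Nat.card_Ico, nsmul_eq_mul] using this
    have hA2 : h ((t + 1) * T + q) ≤ ρ * h (t * T + q) + 2 * L * ((T : ℝ) * lam (t * T + q)) := by
      refine A.trans ?_
      have h2 : 2 * L * ∑ r ∈ Finset.Ico (t * T + q) ((t + 1) * T + q), lam r
          ≤ 2 * L * ((T : ℝ) * lam (t * T + q)) :=
        mul_le_mul_of_nonneg_left Ssum (by linarith)
      linarith
    have hlle : lam ((t + 1) * T + q) ≤ lam (t * T + q) := by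
      apply hlamanti
      rw [Nat.succ_mul]; omega
    have hRHSnn : 0 ≤ ρ * h (t * T + q) + 2 * L * ((T : ℝ) * lam (t * T + q)) := by
      have h1 : 0 ≤ ρ * h (t * T + q) := mul_nonneg hρ0 (hh _)
      have h2 : 0 ≤ 2 * L * ((T : ℝ) * lam (t * T + q)) :=
        mul_nonneg (by positivity) (mul_nonneg (by positivity) (hlam _))
      linarith
    calc lam ((t + 1) * T + q) * h ((t + 1) * T + q)
        ≤ lam ((t + 1) * T + q) * (ρ * h (t * T + q) + 2 * L * ((T : ℝ) * lam (t * T + q))) :=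
          mul_le_mul_of_nonneg_left hA2 (hlam _)
      _ ≤ lam (t * T + q) * (ρ * h (t * T + q) + 2 * L * ((T : ℝ) * lam (t * T + q))) :=
          mul_le_mul_of_nonneg_right hlle hRHSnn
      _ = ρ * (lam (t * T + q) * h (t * T + q)) + 2 * L * T * lam (t * T + q) ^ 2 := by ring
  -- injectivity of t ↦ t*T + q
  have hinj : ∀ q : ℕ, Function.Injective (fun t : ℕ => t * T + q) := by
    intro q a b hab
    simp only at hab
    have : a * T = b * T := by omega
    exact Nat.eq_of_mul_eq_mul_right (by omega) this
  -- partial sums of squares along residue class bounded by Λ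
  have hsqb : ∀ q : ℕ, ∀ n : ℕ, ∑ t ∈ Finset.range n, lam (t * T + q) ^ 2 ≤ Λ := by
    intro q n
    rw [← Finset.sum_image (f := fun k => lam k ^ 2) (g := fun t => t * T + q)
      (fun a _ b _ hab => hinj q hab)]
    exact Summable.sum_le_tsum _ (fun i _ => sq_nonneg _) hsq
  -- the per-residue partial sum bound
  set C : ℕ → ℝ := fun q => (lam q * h q + 2 * L * T * Λ) / (1 - ρ) with hCdef
  have key : ∀ q, q < T → ∀ n : ℕ,
      ∑ t ∈ Finset.range n, lam (t * T + q) * h (t * T + q) ≤ C q := by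
    intro q hq n
    have hmono' : ∀ m : ℕ, ∑ t ∈ Finset.range m, lam (t * T + q) * h (t * T + q)
        ≤ ∑ t ∈ Finset.range (m + 1), lam (t * T + q) * h (t * T + q) := by
      intro m
      apply Finset.sum_le_sum_of_subset_of_nonneg
      · exact Finset.range_subset_range.mpr (by omega)
      · intro i _ _; exact mul_nonneg (hlam _) (hh _)
    have hP1 : ∀ m : ℕ, ∑ t ∈ Finset.range (m + 1), lam (t * T + q) * h (t * T + q) ≤ C q := by
      intro m
      set P := fun n : ℕ => ∑ t ∈ Finset.range n, lam (t * T + q) * h (t * T + q) with hPdef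
      have hsplit : P (m + 1)
          = (∑ t ∈ Finset.range m, lam ((t + 1) * T + q) * h ((t + 1) * T + q))
            + lam (0 * T + q) * h (0 * T + q) := by
        simp only [hPdef]
        exact Finset.sum_range_succ' _ m
      have hsum : ∑ t ∈ Finset.range m, lam ((t + 1) * T + q) * h ((t + 1) * T + q)
          ≤ ρ * P m + 2 * L * T * Λ := by
        calc ∑ t ∈ Finset.range m, lam ((t + 1) * T + q) * h ((t + 1) * T + q)
            ≤ ∑ t ∈ Finset.range m,
              (ρ * (lam (t * T + q) * h (t * T + q)) + 2 * L * T * lam (t * T + q) ^ 2) :=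
              Finset.sum_le_sum (fun t _ => hstep q hq t)
          _ = ρ * P m + 2 * L * T * ∑ t ∈ Finset.range m, lam (t * T + q) ^ 2 := by
              rw [Finset.sum_add_distrib, ← Finset.mul_sum, ← Finset.mul_sum]
          _ ≤ ρ * P m + 2 * L * T * Λ := by
              have h2 : 2 * L * (T : ℝ) * (∑ t ∈ Finset.range m, lam (t * T + q) ^ 2)
                  ≤ 2 * L * (T : ℝ) * Λ :=
                mul_le_mul_of_nonneg_left (hsqb q m) (by positivity)
              linarith
      have hρP : ρ * P m ≤ ρ * P (m + 1) :=
        mul_le_mul_of_nonneg_left (hmono' m) hρ0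
      have h0 : lam (0 * T + q) * h (0 * T + q) = lam q * h q := by norm_num
      have hfinal : P (m + 1) ≤ ρ * P (m + 1) + (lam q * h q + 2 * L * T * Λ) := by
        linarith [hsplit, hsum, hρP, h0]
      have h1ρ : (0:ℝ) < 1 - ρ := by linarith
      show P (m + 1) ≤ C q
      rw [hCdef]
      simp only
      rw [le_div_iff₀ h1ρ]
      nlinarith [hfinal]
    exact (hmono' n).trans (hP1 n)
  -- assemble: decompose k = (k/T)*T + k%T
  have hCnn : ∀ q, 0 ≤ C q := by
    intro q
    apply div_nonneg
    · have := mul_nonneg (hlam q) (hh q); positivity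
    · linarith
  apply summable_of_sum_range_le (c := ∑ q ∈ Finset.range T, C q)
    (fun k => mul_nonneg (hlam k) (hh k))
  intro n
  have hrw : ∀ k : ℕ, lam k * h k
      = (fun p : ℕ × ℕ => lam (p.2 * T + p.1) * h (p.2 * T + p.1)) (k % T, k / T) := by
    intro k
    have : k / T * T + k % T = k := by
      have h1 := Nat.div_add_mod k T
      have h2 : k / T * T = T * (k / T) := Nat.mul_comm _ _
      omega
    simp only [this]
  have hinj2 : ∀ a ∈ Finset.range n, ∀ b ∈ Finset.range n,
      (fun k : ℕ => ((k % T, k / T) : ℕ × ℕ)) a = (fun k : ℕ => ((k % T, k / T) : ℕ × ℕ)) b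
      → a = b := by
    intro a _ b _ hab
    simp only [Prod.mk.injEq] at hab
    calc a = T * (a / T) + a % T := (Nat.div_add_mod a T).symm
      _ = T * (b / T) + b % T := by rw [hab.1, hab.2]
      _ = b := Nat.div_add_mod b T
  calc ∑ k ∈ Finset.range n, lam k * h k
      = ∑ p ∈ (Finset.range n).image (fun k => ((k % T, k / T) : ℕ × ℕ)),
          lam (p.2 * T + p.1) * h (p.2 * T + p.1) := by
        rw [Finset.sum_image hinj2]
        exact Finset.sum_congr rfl (fun k _ => hrw k)
    _ ≤ ∑ p ∈ Finset.range T ×ˢ Finset.range n,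
          lam (p.2 * T + p.1) * h (p.2 * T + p.1) := by
        apply Finset.sum_le_sum_of_subset_of_nonneg
        · intro p hp
          simp only [Finset.mem_image, Finset.mem_range] at hp
          obtain ⟨k, hk, hkp⟩ := hp
          rw [Finset.mem_product]
          constructor
          · rw [← hkp]; exact Finset.mem_range.mpr (Nat.mod_lt k (by omega))
          · rw [← hkp]; exact Finset.mem_range.mpr (lt_of_le_of_lt (Nat.div_le_self k T) hk)
        · intro p _ _; exact mul_nonneg (hlam _) (hh _)
    _ = ∑ q ∈ Finset.range T, ∑ t ∈ Finset.range n, lam (t * T + q) * h (t * T + q) := by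
        rw [Finset.sum_product]
    _ ≤ ∑ q ∈ Finset.range T, C q :=
        Finset.sum_le_sum (fun q hq => key q (Finset.mem_range.mp hq) n)
end

section
/- Let hₖ ≥ 0 satisfy h_{tT+q} ≤ (1 − η^T) h_{(t−1)T+q} + 2L ∑_{r=(t−1)T+q}^{tT+q−1} λᵣ for all t ≥ 1, 0 ≤ q ≤ T−1, where η ∈ (0,1), T ≥ 1, L > 0, and λₖ → 0. Then hₖ → 0. -/
open Filter

lemma aux_contract (g e : ℕ → ℝ) (hg : ∀ n, 0 ≤ g n) (ρ : ℝ) (hρ0 : 0 ≤ ρ) (hρ1 : ρ < 1)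
    (hrec : ∀ n, g (n + 1) ≤ ρ * g n + e n) (he : Tendsto e atTop (nhds 0)) :
    Tendsto g atTop (nhds 0) := by
  rw [Metric.tendsto_atTop] at he ⊢
  intro ε hε
  obtain ⟨N, hN⟩ := he (ε * (1 - ρ) / 2)
    (div_pos (mul_pos hε (by linarith)) two_pos)
  have claim : ∀ m, g (N + m) ≤ ρ ^ m * g N + ε / 2 := by
    intro m
    induction m with
    | zero => simp; linarith
    | succ m ih =>
        have hE : e (N + m) < ε * (1 - ρ) / 2 := by
          have := hN (N + m) (Nat.le_add_right _ _)
          rw [Real.dist_eq, sub_zero] at this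
          exact lt_of_le_of_lt (le_abs_self _) this
        have h1 : g (N + m + 1) ≤ ρ * g (N + m) + e (N + m) := hrec _
        have h2 : ρ * g (N + m) ≤ ρ * (ρ ^ m * g N + ε / 2) :=
          mul_le_mul_of_nonneg_left ih hρ0
        have : g (N + (m + 1)) ≤ ρ * (ρ ^ m * g N + ε / 2) + ε * (1 - ρ) / 2 := by
          have : N + (m + 1) = N + m + 1 := by omega
          rw [this]; linarith
        calc g (N + (m + 1)) ≤ ρ * (ρ ^ m * g N + ε / 2) + ε * (1 - ρ) / 2 := this
          _ = ρ ^ (m + 1) * g N + ε / 2 + (ρ * ε / 2 + ε * (1 - ρ) / 2 - ε / 2) := by ring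
          _ ≤ ρ ^ (m + 1) * g N + ε / 2 := by nlinarith
  have hpow : Tendsto (fun m => ρ ^ m * g N) atTop (nhds 0) := by
    simpa using (tendsto_pow_atTop_nhds_zero_of_lt_one hρ0 hρ1).mul_const (g N)
  rw [Metric.tendsto_atTop] at hpow
  obtain ⟨M, hM⟩ := hpow (ε / 2) (by linarith)
  refine ⟨N + M, fun n hn => ?_⟩
  have hm : n = N + (n - N) := by omega
  have h1 : g n ≤ ρ ^ (n - N) * g N + ε / 2 := by
    have := claim (n - N); rwa [← hm] at this
  have h2 := hM (n - N) (by omega)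
  rw [Real.dist_eq, sub_zero] at h2
  have h3 : ρ ^ (n - N) * g N < ε / 2 := lt_of_le_of_lt (le_abs_self _) h2
  rw [Real.dist_eq, sub_zero, abs_of_nonneg (hg n)]
  linarith

theorem disagreement_tendsto_zero
    (h lam : ℕ → ℝ) (hh : ∀ k, 0 ≤ h k) (hlam : ∀ k, 0 ≤ lam k)
    (hlam0 : Tendsto lam atTop (nhds 0))
    (T : ℕ) (hT : 1 ≤ T) (η : ℝ) (hη0 : 0 < η) (hη1 : η < 1) (L : ℝ) (hL : 0 < L)
    (hrec : ∀ t : ℕ, 1 ≤ t → ∀ q : ℕ, q ≤ T - 1 →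
      h (t * T + q) ≤ (1 - η ^ T) * h ((t - 1) * T + q) +
        2 * L * ∑ r ∈ Finset.Ico ((t - 1) * T + q) (t * T + q), lam r) :
    Tendsto h atTop (nhds 0) := by
  set ρ : ℝ := 1 - η ^ T with hρ
  have hρ0 : 0 ≤ ρ := by
    have : η ^ T ≤ 1 := pow_le_one₀ hη0.le hη1.le
    simp [hρ]; linarith
  have hρ1 : ρ < 1 := by
    have : 0 < η ^ T := pow_pos hη0 T
    simp [hρ]; linarith
  -- for each residue q < T, the subsequence tends to 0
  have key : ∀ q, q < T → Tendsto (fun s => h ((s + 1) * T + q)) atTop (nhds 0) := by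
    intro q hq
    apply aux_contract (fun s => h ((s + 1) * T + q))
      (fun s => 2 * L * ∑ r ∈ Finset.Ico ((s + 1) * T + q) ((s + 2) * T + q), lam r)
      (fun s => hh _) ρ hρ0 hρ1
    · intro s
      have := hrec (s + 2) (by omega) q (by omega)
      simpa using this
    · have hsum : ∀ s, ∑ r ∈ Finset.Ico ((s + 1) * T + q) ((s + 2) * T + q), lam r
          = ∑ i ∈ Finset.range T, lam ((s + 1) * T + q + i) := by
        intro s
        have hTd : (s + 2) * T + q - ((s + 1) * T + q) = T := by
          have h' : (s + 2) * T = (s + 1) * T + T := by ring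
          omega
        rw [Finset.sum_Ico_eq_sum_range, hTd]
      have h1 : Tendsto (fun s => ∑ i ∈ Finset.range T, lam ((s + 1) * T + q + i))
          atTop (nhds 0) := by
        have : (0 : ℝ) = ∑ i ∈ Finset.range T, (0 : ℝ) := by simp
        rw [this]
        apply tendsto_finset_sum
        intro i _
        apply hlam0.comp
        apply tendsto_atTop_mono (fun s => ?_) tendsto_id
        have : (s + 1) * 1 ≤ (s + 1) * T := Nat.mul_le_mul_left _ hT
        simp only [id]
        omega
      have h2 : Tendsto (fun s => 2 * L * ∑ i ∈ Finset.range T, lam ((s + 1) * T + q + i))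
          atTop (nhds 0) := by
        simpa using h1.const_mul (2 * L)
      simpa only [hsum] using h2
  rw [Metric.tendsto_atTop]
  intro ε hε
  have key' : ∀ q, ∃ N, q < T → ∀ s ≥ N, h ((s + 1) * T + q) < ε := by
    intro q
    by_cases hq : q < T
    · have := key q hq
      rw [Metric.tendsto_atTop] at this
      obtain ⟨N, hN⟩ := this ε hε
      refine ⟨N, fun _ s hs => ?_⟩
      have := hN s hs
      rwa [Real.dist_eq, sub_zero, abs_of_nonneg (hh _)] at this
    · exact ⟨0, fun h' => absurd h' hq⟩
  choose N hN using key'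
  set M := (Finset.range T).sup N with hM
  refine ⟨(M + 2) * T, fun k hk => ?_⟩
  have hTpos : 0 < T := hT
  set q := k % T with hqdef
  set t := k / T with htdef
  have hqT : q < T := Nat.mod_lt _ hTpos
  have hkeq : k = t * T + q := by
    rw [htdef, hqdef, Nat.mul_comm]
    exact (Nat.div_add_mod k T).symm
  have ht : M + 2 ≤ t := by
    have := Nat.div_le_div_right (c := T) hk
    rwa [Nat.mul_div_cancel _ hTpos] at this
  have hNq : N q ≤ M := Finset.le_sup (Finset.mem_range.mpr hqT)
  have hs' : h ((t - 1 + 1) * T + q) < ε := hN q hqT (t - 1) (by omega)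
  have ht1 : t - 1 + 1 = t := by omega
  rw [ht1] at hs'
  rw [Real.dist_eq, sub_zero, abs_of_nonneg (hh _), hkeq]
  exact hs'
end
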